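/- For σ > 1, the quantity h(σ) = 2σ²·log σ/(σ²−1) is strictly positive, and consequently z₊ > z₋ where z₊ = −A·g + √((A/σ)²·g² + h(σ)/σ²) and z₋ = (A/σ)·g − √(A²·g² + h(σ)) for any g ≥ 0 and A > 0; hence the error of the high-variance class exceeds that of the low-variance class: Φ(z₊) > Φ(z₋). -/

import Mathlib

open Real Set

/-- Standard normal cumulative distribution function. -/
noncomputable def stdNormalCDF (z : ℝ) : ℝ :=
  ∫ t in Set.Iic z, (Real.sqrt (2 * Real.pi))⁻¹ * Real.exp (-t ^ 2 / 2)

lemma gauss_integrable :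
    MeasureTheory.Integrable (fun t : ℝ => (Real.sqrt (2 * Real.pi))⁻¹ * Real.exp (-t ^ 2 / 2)) := by
  have h := (integrable_exp_neg_mul_sq (by norm_num : (0:ℝ) < 1/2)).const_mul
    (Real.sqrt (2 * Real.pi))⁻¹
  convert h using 2 with t
  ring_nf

lemma stdNormalCDF_strictMono {a b : ℝ} (hab : a < b) : stdNormalCDF a < stdNormalCDF b := by
  have hint := gauss_integrable
  have key : stdNormalCDF b - stdNormalCDF a
      = ∫ t in a..b, (Real.sqrt (2 * Real.pi))⁻¹ * Real.exp (-t ^ 2 / 2) := by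
    unfold stdNormalCDF
    rw [intervalIntegral.integral_Iic_sub_Iic hint.integrableOn hint.integrableOn]
  have hpos : 0 < ∫ t in a..b, (Real.sqrt (2 * Real.pi))⁻¹ * Real.exp (-t ^ 2 / 2) := by
    apply intervalIntegral.intervalIntegral_pos_of_pos_on
    · exact hint.integrableOn.intervalIntegrable
    · intro x _
      positivity
    · exact hab
  linarith [key ▸ hpos]

theorem stmt4 (σ A g : ℝ) (hσ : 1 < σ) (hA : 0 < A) (hg : 0 ≤ g)
    (h zp zm : ℝ)
    (hh : h = 2 * σ ^ 2 * Real.log σ / (σ ^ 2 - 1))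
    (hzp : zp = -A * g + Real.sqrt ((A / σ) ^ 2 * g ^ 2 + h / σ ^ 2))
    (hzm : zm = (A / σ) * g - Real.sqrt (A ^ 2 * g ^ 2 + h)) :
    0 < h ∧ zm < zp ∧ stdNormalCDF zm < stdNormalCDF zp := by
  have hσ0 : 0 < σ := by linarith
  have hh0 : 0 < h := by
    rw [hh]
    have hlog : 0 < Real.log σ := Real.log_pos hσ
    have : 0 < σ ^ 2 - 1 := by nlinarith
    positivity
  have hs : Real.sqrt (A ^ 2 * g ^ 2 + h) > A * g := by
    have : A * g = Real.sqrt ((A * g) ^ 2) := by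
      rw [Real.sqrt_sq (by positivity)]
    rw [this]
    apply Real.sqrt_lt_sqrt (by positivity)
    nlinarith
  have hrw : Real.sqrt ((A / σ) ^ 2 * g ^ 2 + h / σ ^ 2)
      = Real.sqrt (A ^ 2 * g ^ 2 + h) / σ := by
    rw [eq_div_iff (ne_of_gt hσ0), ← Real.sqrt_sq hσ0.le,
      ← Real.sqrt_mul (by positivity)]
    congr 1
    field_simp
    rw [Real.sq_sqrt (by positivity)]
  have hzmzp : zm < zp := by
    rw [hzp, hzm, hrw]
    have h1 : 0 < 1 + 1 / σ := by positivity
    have : zp - zm = (1 + 1/σ) * (Real.sqrt (A ^ 2 * g ^ 2 + h) - A * g) := by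
      rw [hzp, hzm, hrw]; field_simp; ring
    nlinarith [mul_pos h1 (sub_pos.mpr hs)]
  exact ⟨hh0, hzmzp, stdNormalCDF_strictMono hzmzp⟩
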